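/- If RP(κ) holds for a regular cardinal κ ≥ ω₂, then every stationary subset of { α < κ : cf(α) = ω } reflects at an ordinal of cofinality ω₁; that is, there is γ < κ of cofinality ω₁ such that S ∩ γ is stationary in γ. -/

import Mathlib

/-- `C` is a closed unbounded (club) subset of the ordinal `γ`. -/
def OClub (γ : Ordinal.{0}) (C : Set Ordinal.{0}) : Prop :=
  C ⊆ Set.Iio γ ∧ (∀ β < γ, ∃ c ∈ C, β < c) ∧
  ∀ δ < γ, (C ∩ Set.Iio δ).Nonempty → sSup (C ∩ Set.Iio δ) = δ → δ ∈ C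

/-- `S` is a stationary subset of the ordinal `γ`: it meets every club of `γ`. -/
def OStat (γ : Ordinal.{0}) (S : Set Ordinal.{0}) : Prop :=
  ∀ C, OClub γ C → (S ∩ C).Nonempty

/-- `S` is a stationary family of countable subsets of `B` (stationary in `[B]^ω`):
for every function `F` from finite subsets of `B` to `B` there is a countable subset of `B`
in `S` closed under `F`. -/
def FamStat (B : Set Ordinal.{0}) (S : Set (Set Ordinal.{0})) : Prop :=
  ∀ F : Finset Ordinal.{0} → Ordinal.{0}, (∀ e : Finset Ordinal.{0}, ↑e ⊆ B → F e ∈ B) →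
    ∃ x ∈ S, x ⊆ B ∧ x.Countable ∧ ∀ e : Finset Ordinal.{0}, ↑e ⊆ x → F e ∈ x

/-- An ordinal `δ < γ` which is a limit of elements of a club `C` of `γ` belongs to `C`. -/
lemma oclub_mem_of_cofinal {γ : Ordinal.{0}} {C : Set Ordinal.{0}} (hC : OClub γ C)
    {δ : Ordinal.{0}} (hδ : δ < γ) (h0 : 0 < δ)
    (hco : ∀ β < δ, ∃ c, c ∈ C ∧ β < c ∧ c < δ) : δ ∈ C := by
  obtain ⟨c0, hc0C, -, hc0δ⟩ := hco 0 h0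
  have hne : (C ∩ Set.Iio δ).Nonempty := ⟨c0, hc0C, hc0δ⟩
  have hbdd : BddAbove (C ∩ Set.Iio δ) := ⟨δ, fun x hx => le_of_lt hx.2⟩
  have hle : sSup (C ∩ Set.Iio δ) ≤ δ := csSup_le hne fun x hx => le_of_lt hx.2
  have hge : δ ≤ sSup (C ∩ Set.Iio δ) := by
    by_contra h
    push_neg at h
    obtain ⟨c, hcC, hlt, hcδ⟩ := hco _ h
    exact absurd (le_csSup hbdd ⟨hcC, hcδ⟩) (not_le.mpr hlt)
  exact hC.2.2 δ hδ hne (le_antisymm hle hge)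

/-- The set of infinite ordinals below `κ.ord` closed under `F` is a club in `κ.ord`,
for `κ` regular uncountable. -/
lemma club_closurePoints (κ : Cardinal.{0}) (hreg : κ.IsRegular)
    (haleph1 : Cardinal.aleph 1 < κ)
    (F : Finset Ordinal.{0} → Ordinal.{0})
    (hF : ∀ e : Finset Ordinal.{0}, ↑e ⊆ Set.Iio κ.ord → F e ∈ Set.Iio κ.ord) :
    OClub κ.ord {δ | δ < κ.ord ∧ Ordinal.omega0 ≤ δ ∧
      ∀ e : Finset Ordinal.{0}, ↑e ⊆ Set.Iio δ → F e < δ} := by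
  have haleph0 : Cardinal.aleph0 < κ := lt_trans Cardinal.aleph0_lt_aleph_one haleph1
  have hκcof : κ.ord.cof = κ := hreg.cof_eq
  have hκlim : Order.IsSuccLimit κ.ord := Cardinal.isSuccLimit_ord hreg.aleph0_le
  have hωκ : Ordinal.omega0 < κ.ord := by
    rw [Cardinal.lt_ord, Ordinal.card_omega0]; exact haleph0
  refine ⟨fun δ hδ => hδ.1, ?_, ?_⟩
  · -- unboundedness
    intro β hβ
    classical
    -- one closure step
    set nxt : Ordinal.{0} → Ordinal.{0} := fun b =>
      max (b + 1) (max Ordinal.omega0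
        ((⨆ t : Finset b.ToType,
          F (t.image fun i => (((Ordinal.ToType.mk (o := b))).symm i).1)) + 1)) with hnxt
    have hstep : ∀ b : Ordinal.{0}, Ordinal.omega0 ≤ b → b < κ.ord →
        (Ordinal.omega0 ≤ nxt b ∧ nxt b < κ.ord ∧ b < nxt b ∧
          ∀ e : Finset Ordinal.{0}, ↑e ⊆ Set.Iio b → F e < nxt b) := by
      intro b hωb hbκ
      have hinf : Infinite b.ToType := by
        rw [Cardinal.infinite_iff, Cardinal.mk_toType]
        calc Cardinal.aleph0 = Ordinal.omega0.card := Ordinal.card_omega0.symm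
          _ ≤ b.card := Ordinal.card_le_card hωb
      have hmk : Cardinal.mk (Finset b.ToType) < κ.ord.cof := by
        rw [hκcof, Cardinal.mk_finset_of_infinite, Cardinal.mk_toType]
        exact Cardinal.lt_ord.mp hbκ
      have hfb : ∀ t : Finset b.ToType,
          F (t.image fun i => (((Ordinal.ToType.mk (o := b))).symm i).1) < κ.ord := by
        intro t
        apply hF
        intro a ha
        simp only [Finset.coe_image, Set.mem_image] at ha
        obtain ⟨i, -, rfl⟩ := ha
        exact lt_trans (Set.mem_Iio.mp (((Ordinal.ToType.mk (o := b))).symm i).2) hbκ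
      have hsup : (⨆ t : Finset b.ToType,
          F (t.image fun i => (((Ordinal.ToType.mk (o := b))).symm i).1)) < κ.ord :=
        Ordinal.iSup_lt_ord hmk hfb
      have h1 : nxt b < κ.ord := by
        rw [hnxt]
        apply max_lt (hκlim.succ_lt hbκ)
        exact max_lt hωκ (hκlim.succ_lt hsup)
      refine ⟨le_trans (le_max_left _ _) (le_max_right _ _), h1, ?_, ?_⟩
      · exact lt_of_lt_of_le (lt_add_one b) (le_max_left _ _)
      · intro e he
        have hbdd : BddAbove (Set.range fun t : Finset b.ToType =>
            F (t.image fun i => (((Ordinal.ToType.mk (o := b))).symm i).1)) :=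
          Ordinal.bddAbove_range _
        -- e is the image of a finset of b.ToType
        set t : Finset b.ToType :=
          e.attach.image (fun a => (Ordinal.ToType.mk (o := b)) ⟨a.1, he a.2⟩) with ht
        have heq : (t.image fun i => (((Ordinal.ToType.mk (o := b))).symm i).1) = e := by
          ext a
          simp only [ht, Finset.mem_image, Finset.mem_attach, true_and, Subtype.exists]
          constructor
          · rintro ⟨i, ⟨z, hz, rfl⟩, rfl⟩
            simpa using hz
          · intro ha
            exact ⟨(Ordinal.ToType.mk (o := b)) ⟨a, he ha⟩, ⟨a, ha, rfl⟩, by simp⟩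
        have : F e ≤ ⨆ t : Finset b.ToType,
            F (t.image fun i => (((Ordinal.ToType.mk (o := b))).symm i).1) := by
          conv_lhs => rw [← heq]
          exact le_ciSup hbdd t
        calc F e ≤ _ := this
          _ < _ + 1 := lt_add_one _
          _ ≤ nxt b := le_trans (le_max_right _ _) (le_max_right _ _)
    -- iterate
    set g : ℕ → Ordinal.{0} := fun n => Nat.rec (max (β + 1) Ordinal.omega0)
      (fun _ ih => nxt ih) n with hg
    have hginv : ∀ n, Ordinal.omega0 ≤ g n ∧ g n < κ.ord := by
      intro n
      induction n with
      | zero =>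
        exact ⟨le_max_right _ _, max_lt (hκlim.succ_lt hβ) hωκ⟩
      | succ n ih =>
        obtain ⟨h1, h2⟩ := ih
        obtain ⟨a, b, -, -⟩ := hstep _ h1 h2
        exact ⟨a, b⟩
    have hgmono : ∀ n, g n < g (n + 1) := by
      intro n
      obtain ⟨h1, h2⟩ := hginv n
      exact (hstep _ h1 h2).2.2.1
    have hgmono' : Monotone g := monotone_nat_of_le_succ fun n => le_of_lt (hgmono n)
    have hbddg : BddAbove (Set.range g) := Ordinal.bddAbove_range _
    set δ : Ordinal.{0} := ⨆ n, g n with hδdef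
    have hδκ : δ < κ.ord := by
      apply Ordinal.iSup_lt_ord _ fun n => (hginv n).2
      rw [hκcof, Cardinal.mk_nat]
      exact haleph0
    have hgδ : ∀ n, g n ≤ δ := fun n => le_ciSup hbddg n
    refine ⟨δ, ⟨hδκ, le_trans (hginv 0).1 (hgδ 0), ?_⟩, lt_of_lt_of_le
      (lt_of_lt_of_le (lt_add_one β) (le_trans (le_max_left _ _) (hgδ 0))) (le_refl δ)⟩
    intro e he
    -- find n with ↑e ⊆ Iio (g n)
    have hex : ∃ n, (↑e : Set Ordinal.{0}) ⊆ Set.Iio (g n) := by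
      induction e using Finset.induction with
      | empty => exact ⟨0, by simp⟩
      | @insert a s ha ih =>
        obtain ⟨n, hn⟩ := ih (fun z hz => he (by simp [hz]))
        have haδ : a < δ := he (by simp)
        obtain ⟨m, hm⟩ := exists_lt_of_lt_ciSup haδ
        refine ⟨max n m, ?_⟩
        intro z hz
        simp only [Finset.coe_insert, Set.mem_insert_iff] at hz
        rcases hz with rfl | hz
        · exact lt_of_lt_of_le hm (hgmono' (le_max_right n m))
        · exact lt_of_lt_of_le (hn hz) (hgmono' (le_max_left n m))
    obtain ⟨n, hn⟩ := hex
    obtain ⟨h1, h2⟩ := hginv n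
    have := (hstep _ h1 h2).2.2.2 e hn
    exact lt_of_lt_of_le this (hgδ (n + 1))
  · -- closedness
    intro δ hδκ hne hsup
    obtain ⟨c0, hc0⟩ := hne
    have hbdd : BddAbove ({δ_1 | δ_1 < κ.ord ∧ Ordinal.omega0 ≤ δ_1 ∧
        ∀ e : Finset Ordinal.{0}, ↑e ⊆ Set.Iio δ_1 → F e < δ_1} ∩ Set.Iio δ) :=
      ⟨δ, fun x hx => le_of_lt hx.2⟩
    refine ⟨hδκ, le_trans hc0.1.2.1 (le_of_lt hc0.2), ?_⟩
    intro e he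
    have hec : ∃ c, c ∈ ({δ_1 | δ_1 < κ.ord ∧ Ordinal.omega0 ≤ δ_1 ∧
        ∀ e : Finset Ordinal.{0}, ↑e ⊆ Set.Iio δ_1 → F e < δ_1} ∩ Set.Iio δ) ∧
        (↑e : Set Ordinal.{0}) ⊆ Set.Iio c := by
      by_cases hee : e.Nonempty
      · have hmax : e.max' hee < δ := he (e.max'_mem hee)
        rw [← hsup] at hmax
        obtain ⟨c, hc, hcc⟩ := exists_lt_of_lt_csSup ⟨c0, hc0⟩ hmax
        exact ⟨c, hc, fun z hz => lt_of_le_of_lt (e.le_max' z hz) hcc⟩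
      · refine ⟨c0, hc0, ?_⟩
        rw [Finset.not_nonempty_iff_eq_empty] at hee
        simp [hee]
    obtain ⟨c, hc, hec⟩ := hec
    exact lt_of_lt_of_le (hc.1.2.2 e hec) (le_of_lt hc.2)

/-- Closing a countable set under `F`, below a closure point `δ`. -/
lemma exists_closure (F : Finset Ordinal.{0} → Ordinal.{0}) (δ : Ordinal.{0})
    (hδ : ∀ e : Finset Ordinal.{0}, ↑e ⊆ Set.Iio δ → F e < δ)
    (s0 : Set Ordinal.{0}) (hs0 : s0.Countable) (hs0δ : s0 ⊆ Set.Iio δ) :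
    ∃ x : Set Ordinal.{0}, s0 ⊆ x ∧ x ⊆ Set.Iio δ ∧ x.Countable ∧
      ∀ e : Finset Ordinal.{0}, ↑e ⊆ x → F e ∈ x := by
  classical
  set cl : ℕ → Set Ordinal.{0} := fun n => Nat.rec s0
    (fun _ ih => ih ∪ F '' {e : Finset Ordinal.{0} | ↑e ⊆ ih}) n with hcl
  have hclstep : ∀ n, cl (n + 1) = cl n ∪ F '' {e : Finset Ordinal.{0} | ↑e ⊆ cl n} :=
    fun n => rfl
  have hclc : ∀ n, (cl n).Countable := by
    intro n
    induction n with
    | zero => exact hs0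
    | succ n ih =>
      rw [hclstep]
      refine ih.union (Set.Countable.image ?_ F)
      have : {e : Finset Ordinal.{0} | ↑e ⊆ cl n} =
          (fun e : Finset Ordinal.{0} => (↑e : Set Ordinal.{0})) ⁻¹'
          {t : Set Ordinal.{0} | t.Finite ∧ t ⊆ cl n} := by
        ext e; simp [Finset.finite_toSet]
      rw [this]
      exact (Set.countable_setOf_finite_subset ih).preimage Finset.coe_injective
  have hclδ : ∀ n, cl n ⊆ Set.Iio δ := by
    intro n
    induction n with
    | zero => exact hs0δ
    | succ n ih =>
      rw [hclstep]
      rintro a (ha | ⟨e, he, rfl⟩)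
      · exact ih ha
      · exact hδ e (fun z hz => ih (he hz))
  have hclmono : Monotone cl := monotone_nat_of_le_succ fun n => by
    rw [hclstep]; exact Set.subset_union_left
  refine ⟨⋃ n, cl n, Set.subset_iUnion cl 0, Set.iUnion_subset hclδ,
    Set.countable_iUnion hclc, ?_⟩
  intro e he
  have hex : ∃ n, (↑e : Set Ordinal.{0}) ⊆ cl n := by
    induction e using Finset.induction with
    | empty => exact ⟨0, by simp⟩
    | @insert a s ha ih =>
      obtain ⟨n, hn⟩ := ih (fun z hz => he (by simp [hz]))
      have : a ∈ ⋃ n, cl n := he (by simp)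
      obtain ⟨m, hm⟩ := Set.mem_iUnion.mp this
      refine ⟨max n m, ?_⟩
      intro z hz
      simp only [Finset.coe_insert, Set.mem_insert_iff] at hz
      rcases hz with rfl | hz
      · exact hclmono (le_max_right n m) hm
      · exact hclmono (le_max_left n m) (hn hz)
  obtain ⟨n, hn⟩ := hex
  exact Set.mem_iUnion.mpr ⟨n + 1, by rw [hclstep]; exact Or.inr ⟨e, hn, rfl⟩⟩

/-- Two clubs of an ordinal of uncountable cofinality have unbounded intersection. -/
lemma clubs_inter_unbounded {γ : Ordinal.{0}} {C D : Set Ordinal.{0}}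
    (hcof : Cardinal.aleph0 < γ.cof) (hC : OClub γ C) (hD : OClub γ D) :
    ∀ β < γ, ∃ c, c ∈ C ∩ D ∧ β < c := by
  classical
  intro β hβ
  -- interleaved sequence
  set u : ℕ → Ordinal.{0} := fun n => Nat.rec (hC.2.1 β hβ).choose
    (fun n ih => if h : ih < γ then
      (if Even n then (hD.2.1 ih h).choose else (hC.2.1 ih h).choose) else 0) n with hu
  have hu0 : u 0 ∈ C ∧ β < u 0 := by
    obtain ⟨h1, h2⟩ := (hC.2.1 β hβ).choose_spec
    exact ⟨h1, h2⟩
  have huγ : ∀ n, u n < γ := by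
    intro n
    induction n with
    | zero => exact hC.1 hu0.1
    | succ n ih =>
      have : u (n + 1) = if Even n then (hD.2.1 (u n) ih).choose
          else (hC.2.1 (u n) ih).choose := by
        show (if h : u n < γ then _ else 0) = _
        rw [dif_pos ih]
      rw [this]
      by_cases h : Even n
      · rw [if_pos h]; exact hD.1 ((hD.2.1 (u n) ih).choose_spec).1
      · rw [if_neg h]; exact hC.1 ((hC.2.1 (u n) ih).choose_spec).1
  have hustep : ∀ n, u n < u (n + 1) ∧ (Even n → u (n + 1) ∈ D) ∧
      (¬Even n → u (n + 1) ∈ C) := by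
    intro n
    have heq : u (n + 1) = if Even n then (hD.2.1 (u n) (huγ n)).choose
        else (hC.2.1 (u n) (huγ n)).choose := by
      show (if h : u n < γ then _ else 0) = _
      rw [dif_pos (huγ n)]
    by_cases h : Even n
    · rw [heq, if_pos h]
      obtain ⟨h1, h2⟩ := (hD.2.1 (u n) (huγ n)).choose_spec
      exact ⟨h2, fun _ => h1, fun hh => absurd h hh⟩
    · rw [heq, if_neg h]
      obtain ⟨h1, h2⟩ := (hC.2.1 (u n) (huγ n)).choose_spec
      exact ⟨h2, fun hh => absurd hh h, fun _ => h1⟩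
  have hbddu : BddAbove (Set.range u) := Ordinal.bddAbove_range _
  set ε : Ordinal.{0} := ⨆ n, u n with hε
  have hεγ : ε < γ := by
    apply Ordinal.iSup_lt_ord _ huγ
    rw [Cardinal.mk_nat]; exact hcof
  have huε : ∀ n, u n ≤ ε := fun n => le_ciSup hbddu n
  have huε' : ∀ n, u n < ε := fun n => lt_of_lt_of_le (hustep n).1 (huε (n + 1))
  have h0ε : 0 < ε := lt_of_le_of_lt (zero_le (a := u 0)) (huε' 0)
  have hβε : β < ε := lt_of_lt_of_le hu0.2 (huε 0)
  have hεC : ε ∈ C := by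
    apply oclub_mem_of_cofinal hC hεγ h0ε
    intro b hb
    obtain ⟨n, hn⟩ := exists_lt_of_lt_ciSup hb
    by_cases h : Even n
    · -- u (n+1) ∈ D, u (n+2) ∈ C
      have h2 : ¬Even (n + 1) := by simp [Nat.even_add_one, h]
      refine ⟨u (n + 2), (hustep (n + 1)).2.2 h2, ?_, huε' (n + 2)⟩
      exact lt_trans (lt_trans hn (hustep n).1) (hustep (n + 1)).1
    · exact ⟨u (n + 1), (hustep n).2.2 h, lt_trans hn (hustep n).1, huε' (n + 1)⟩
  have hεD : ε ∈ D := by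
    apply oclub_mem_of_cofinal hD hεγ h0ε
    intro b hb
    obtain ⟨n, hn⟩ := exists_lt_of_lt_ciSup hb
    by_cases h : Even n
    · exact ⟨u (n + 1), (hustep n).2.1 h, lt_trans hn (hustep n).1, huε' (n + 1)⟩
    · have h2 : Even (n + 1) := by simp [Nat.even_add_one, h]
      refine ⟨u (n + 2), (hustep (n + 1)).2.1 h2, ?_, huε' (n + 2)⟩
      exact lt_trans (lt_trans hn (hustep n).1) (hustep (n + 1)).1
  exact ⟨ε, ⟨hεC, hεD⟩, hβε⟩

/-- If the Reflection Principle `RP(κ)` holds for a regular cardinal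
`κ ≥ ω₂`, then every stationary subset of `{α < κ | cf(α) = ω}` reflects at an ordinal of
cofinality `ω₁`. -/
theorem RP_implies_stationary_reflection (κ : Cardinal.{0})
    (hreg : κ.IsRegular) (hκ : Cardinal.aleph 2 ≤ κ)
    (hRP : ∀ S : Set (Set Ordinal.{0}),
      (∀ x ∈ S, x ⊆ Set.Iio κ.ord ∧ x.Countable) → FamStat (Set.Iio κ.ord) S →
      ∃ I : Set Ordinal.{0}, I ⊆ Set.Iio κ.ord ∧
        Cardinal.mk ↥I = Cardinal.aleph 1 ∧
        Set.Iio ((Cardinal.aleph 1 : Cardinal.{0}).ord) ⊆ I ∧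
        (sSup I).cof = Cardinal.aleph 1 ∧
        (∃ D ⊆ I, OClub (sSup I) D) ∧
        FamStat I {x ∈ S | x ⊆ I}) :
    ∀ S : Set Ordinal.{0}, S ⊆ {α | α < κ.ord ∧ α.cof = Cardinal.aleph0} →
      OStat κ.ord S →
      ∃ γ < κ.ord, γ.cof = Cardinal.aleph 1 ∧ OStat γ (S ∩ Set.Iio γ) := by
  classical
  intro S hS hstat
  have haleph1 : Cardinal.aleph 1 < κ :=
    lt_of_lt_of_le ((Cardinal.aleph_lt_aleph).mpr one_lt_two) hκ
  have hκcof : κ.ord.cof = κ := hreg.cof_eq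
  -- The family T of countable sets whose sup is in S
  set T : Set (Set Ordinal.{0}) :=
    {x | x ⊆ Set.Iio κ.ord ∧ x.Countable ∧ sSup x ∈ S} with hT
  have hT1 : ∀ x ∈ T, x ⊆ Set.Iio κ.ord ∧ x.Countable := fun x hx => ⟨hx.1, hx.2.1⟩
  have hTstat : FamStat (Set.Iio κ.ord) T := by
    intro F hF
    obtain ⟨δ, hδS, hδκ, hδω, hδcl⟩ :
        ∃ δ, δ ∈ S ∧ δ < κ.ord ∧ Ordinal.omega0 ≤ δ ∧
          ∀ e : Finset Ordinal.{0}, ↑e ⊆ Set.Iio δ → F e < δ := by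
      obtain ⟨δ, hδ1, hδ2⟩ := hstat _ (club_closurePoints κ hreg haleph1 F hF)
      exact ⟨δ, hδ1, hδ2.1, hδ2.2.1, hδ2.2.2⟩
    have hδcof : δ.cof = Cardinal.aleph0 := (hS hδS).2
    have hδlim : Order.IsSuccLimit δ := Ordinal.aleph0_le_cof.mp (le_of_eq hδcof.symm)
    -- a countable cofinal subset of δ
    obtain ⟨ι, f, hlsub, hmkι⟩ := Ordinal.exists_lsub_cof δ
    rw [hδcof] at hmkι
    have hcι : Countable ι := Cardinal.mk_le_aleph0_iff.mp (le_of_eq hmkι)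
    have hrc : (Set.range f).Countable := Set.countable_range f
    have hrδ : Set.range f ⊆ Set.Iio δ := by
      rintro a ⟨i, rfl⟩
      rw [← hlsub]; exact Ordinal.lt_lsub f i
    obtain ⟨x, hx0, hxδ, hxc, hxcl⟩ := exists_closure F δ hδcl (Set.range f) hrc hrδ
    have hsupx : sSup x = δ := by
      have hle : sSup x ≤ δ := csSup_le' fun a ha => le_of_lt (hxδ ha)
      have hbddx : BddAbove x := ⟨δ, fun a ha => le_of_lt (hxδ ha)⟩
      rcases lt_or_eq_of_le hle with hlt | heq
      · exfalso
        have hsucc : Order.succ (sSup x) < δ := hδlim.succ_lt hlt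
        rw [← hlsub] at hsucc
        obtain ⟨i, hi⟩ := Ordinal.lt_lsub_iff.mp hsucc
        have h1 : sSup x < f i := Order.succ_le_iff.mp hi
        have h2 : f i ≤ sSup x := le_csSup hbddx (hx0 ⟨i, rfl⟩)
        exact absurd h2 (not_le.mpr h1)
      · exact heq
    refine ⟨x, ⟨fun a ha => lt_trans (hxδ ha) hδκ, hxc, by rw [hsupx]; exact hδS⟩,
      fun a ha => lt_trans (hxδ ha) hδκ, hxc, hxcl⟩
  -- Apply RP
  obtain ⟨I, hIκ, hmkI, hω1I, hcofI, ⟨D, hDI, hD⟩, hFS⟩ := hRP T hT1 hTstat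
  set γ : Ordinal.{0} := sSup I with hγ
  have hbddI : BddAbove I := ⟨κ.ord, fun a ha => le_of_lt (hIκ ha)⟩
  have hIne : I.Nonempty := by
    refine ⟨0, hω1I ?_⟩
    rw [Set.mem_Iio, Cardinal.lt_ord, Ordinal.card_zero]
    exact lt_trans Cardinal.aleph0_pos Cardinal.aleph0_lt_aleph_one
  have hγκ : γ < κ.ord := by
    have hle : γ ≤ κ.ord := csSup_le' fun a ha => le_of_lt (hIκ ha)
    rcases lt_or_eq_of_le hle with h | h
    · exact h
    · exfalso
      rw [h] at hcofI
      exact absurd (hcofI.symm.trans hκcof) (ne_of_lt haleph1)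
  have hγcof : γ.cof = Cardinal.aleph 1 := hcofI
  refine ⟨γ, hγκ, hγcof, ?_⟩
  -- stationarity of S ∩ Iio γ in γ
  intro C hC
  have hcofγ0 : Cardinal.aleph0 < γ.cof := by
    rw [hγcof]; exact Cardinal.aleph0_lt_aleph_one
  have h0γ : 0 < γ := by
    rcases eq_zero_or_pos γ with h | h
    · exfalso
      have h2 := hγcof
      rw [h, Ordinal.cof_zero] at h2
      exact absurd h2 (ne_of_lt (lt_trans Cardinal.aleph0_pos
        Cardinal.aleph0_lt_aleph_one))
    · exact h
  have hinter : ∀ β < γ, ∃ c, c ∈ C ∩ D ∧ β < c := clubs_inter_unbounded hcofγ0 hC hD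
  obtain ⟨i0, hi0CD, -⟩ := hinter 0 h0γ
  -- the function F picking elements of C ∩ D
  set F : Finset Ordinal.{0} → Ordinal.{0} := fun e =>
    if h : ∃ c, c ∈ C ∩ D ∧ ∀ a ∈ e, a < c then h.choose else i0 with hF
  have hFCD : ∀ e, F e ∈ C ∩ D := by
    intro e
    simp only [hF]
    by_cases h : ∃ c, c ∈ C ∩ D ∧ ∀ a ∈ e, a < c
    · rw [dif_pos h]; exact h.choose_spec.1
    · rw [dif_neg h]; exact hi0CD
  have hFI : ∀ e : Finset Ordinal.{0}, ↑e ⊆ I → F e ∈ I := fun e _ => hDI (hFCD e).2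
  obtain ⟨x, ⟨hxT, hxI⟩, -, hxc, hxcl⟩ := hFS F hFI
  set δ : Ordinal.{0} := sSup x with hδ
  have hδS : δ ∈ S := hxT.2.2
  have hδcof : δ.cof = Cardinal.aleph0 := (hS hδS).2
  have hbddx : BddAbove x := ⟨κ.ord, fun a ha => le_of_lt (hIκ (hxI ha))⟩
  have hδγ : δ ≤ γ := csSup_le' fun a ha => le_csSup hbddI (hxI ha)
  have hδγ' : δ < γ := by
    rcases lt_or_eq_of_le hδγ with h | h
    · exact h
    · exfalso
      rw [← h] at hγcof
      rw [hδcof] at hγcof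
      exact absurd hγcof (ne_of_lt Cardinal.aleph0_lt_aleph_one)
  have hxγ : ∀ a ∈ x, a < γ := fun a ha => lt_of_le_of_lt (le_csSup hbddx ha) hδγ'
  have hxne : x.Nonempty := ⟨F ∅, hxcl ∅ (by simp)⟩
  have h0δ : 0 < δ :=
    (Ordinal.aleph0_le_cof.mp (le_of_eq hδcof.symm)).pos
  -- key: for every a ∈ x, F {a} ∈ x ∩ C with a < F {a}
  have hkey : ∀ a ∈ x, F {a} ∈ x ∧ F {a} ∈ C ∧ a < F {a} := by
    intro a ha
    have hex : ∃ c, c ∈ C ∩ D ∧ ∀ z ∈ ({a} : Finset Ordinal.{0}), z < c := by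
      obtain ⟨c, hc, hac⟩ := hinter a (hxγ a ha)
      exact ⟨c, hc, fun z hz => by rw [Finset.mem_singleton] at hz; rw [hz]; exact hac⟩
    have hspec : F {a} ∈ C ∩ D ∧ ∀ z ∈ ({a} : Finset Ordinal.{0}), z < F {a} := by
      simp only [hF]
      rw [dif_pos hex]
      exact hex.choose_spec
    have hmem : F {a} ∈ x := hxcl {a} (by simp [ha])
    exact ⟨hmem, hspec.1.1, hspec.2 a (Finset.mem_singleton_self a)⟩
  have hδC : δ ∈ C := by
    by_cases h : δ ∈ C
    · exact h
    · apply oclub_mem_of_cofinal hC hδγ' h0δ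
      intro b hb
      obtain ⟨a, ha, hba⟩ := exists_lt_of_lt_csSup hxne hb
      obtain ⟨h1, h2, h3⟩ := hkey a ha
      refine ⟨F {a}, h2, lt_trans hba h3, ?_⟩
      rcases lt_or_eq_of_le (le_csSup hbddx h1) with hlt | heq
      · exact hlt
      · exact absurd (show δ ∈ C by rw [hδ, ← heq]; exact h2) h
  exact ⟨δ, ⟨hδS, hδγ'⟩, hδC⟩
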